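/- In the Hessenberg index-2 setting with ψ = 0, ζ^z = 0, and adjoint terminal condition φ^{(y)}(T) = (I - ḡ_yᵀ (f̄_zᵀ ḡ_yᵀ)⁻¹ f̄_zᵀ) ζ^y |_{t=T}, the error in the QoI depending only on the differential variables at the terminal time satisfies (e^{(y)}(T), ζ^y) = (e^{(y)}(0), φ^{(y)}(0)) + ∫₀ᵀ (φ^{(y)}, f(Y,Z) - Ẏ) dt + ∫₀ᵀ (φ^{(z)}, g(Y)) dt - ((f̄_zᵀ ḡ_yᵀ)⁻¹ f̄_zᵀ ζ^y, g(Y))|_{t=T}. -/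

import Mathlib

open Matrix MeasureTheory

lemma dot_hasDerivAt {n : ℕ} {u v : ℝ → Fin n → ℝ} {u' v' : Fin n → ℝ} {t : ℝ}
    (hu : HasDerivAt u u' t) (hv : HasDerivAt v v' t) :
    HasDerivAt (fun s => u s ⬝ᵥ v s) (u' ⬝ᵥ v t + u t ⬝ᵥ v') t := by
  simp only [dotProduct]
  rw [← Finset.sum_add_distrib]
  exact HasDerivAt.fun_sum fun i _ => ((hasDerivAt_pi.mp hu) i).mul ((hasDerivAt_pi.mp hv) i)

lemma transpose_mulVec_dot {n m : ℕ} (A : Matrix (Fin m) (Fin n) ℝ)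
    (u : Fin m → ℝ) (v : Fin n → ℝ) : (Aᵀ *ᵥ u) ⬝ᵥ v = u ⬝ᵥ (A *ᵥ v) := by
  rw [Matrix.mulVec_transpose, ← Matrix.dotProduct_mulVec]

/-- Terminal-time QoI error representation for a Hessenberg index-2 DAE,
for a QoI involving only the differential variables. -/
theorem hessenberg2_terminal_qoi_error_differential_only {n m : ℕ} (T : ℝ) (hT : 0 < T)
    (f : (Fin n → ℝ) × (Fin m → ℝ) → (Fin n → ℝ))
    (g : (Fin n → ℝ) → (Fin m → ℝ))
    (hf : ContDiff ℝ 1 f) (hg : ContDiff ℝ 1 g)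
    (y Y Y' φy : ℝ → Fin n → ℝ) (z Z φz : ℝ → Fin m → ℝ)
    (ζy : Fin n → ℝ)
    (fby : ℝ → Matrix (Fin n) (Fin n) ℝ) (fbz : ℝ → Matrix (Fin n) (Fin m) ℝ)
    (gby : ℝ → Matrix (Fin m) (Fin n) ℝ)
    -- the averaged Jacobians satisfy the linearization identities
    (hlinf : ∀ t, fby t *ᵥ (y t - Y t) + fbz t *ᵥ (z t - Z t)
      = f (y t, z t) - f (Y t, Z t))
    (hling : ∀ t, gby t *ᵥ (y t - Y t) = -g (Y t))
    -- the true solution of the Hessenberg index-2 DAE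
    (hy : ∀ t ∈ Set.Icc (0:ℝ) T, HasDerivAt y (f (y t, z t)) t)
    (hcon : ∀ t ∈ Set.Icc (0:ℝ) T, g (y t) = 0)
    -- the approximate solution and its derivative
    (hY : ∀ t ∈ Set.Icc (0:ℝ) T, HasDerivAt Y (Y' t) t)
    -- the homogeneous adjoint DAE (ψ = 0, ḡ_z = 0)
    (hadj1 : ∀ t ∈ Set.Ico (0:ℝ) T,
      HasDerivAt φy (-((fby t)ᵀ *ᵥ φy t + (gby t)ᵀ *ᵥ φz t)) t)
    (hadj2 : ∀ t ∈ Set.Ico (0:ℝ) T, (fbz t)ᵀ *ᵥ φy t = 0)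
    -- sufficient smoothness for the integrals and integration by parts
    (hyc : Continuous y) (hYc : Continuous Y) (hY'c : Continuous Y')
    (hzc : Continuous z) (hZc : Continuous Z)
    (hφyc : Continuous φy) (hφzc : Continuous φz)
    -- invertibility of ḡ_y f̄_z at the terminal time
    (hinv : IsUnit (gby T * fbz T))
    -- adjoint terminal condition (ζᶻ = 0)
    (hφT : φy T =
      (1 - (gby T)ᵀ * ((fbz T)ᵀ * (gby T)ᵀ)⁻¹ * (fbz T)ᵀ) *ᵥ ζy) :
    (y T - Y T) ⬝ᵥ ζy
    = (y 0 - Y 0) ⬝ᵥ φy 0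
      + (∫ t in (0:ℝ)..T, φy t ⬝ᵥ (f (Y t, Z t) - Y' t))
      + (∫ t in (0:ℝ)..T, φz t ⬝ᵥ g (Y t))
      - ((((fbz T)ᵀ * (gby T)ᵀ)⁻¹ * (fbz T)ᵀ) *ᵥ ζy) ⬝ᵥ g (Y T) := by
  set e : ℝ → Fin n → ℝ := fun t => y t - Y t with he
  -- derivative of t ↦ φy t ⬝ᵥ e t on the open interval
  have hderiv : ∀ t ∈ Set.Ioo (0:ℝ) T,
      HasDerivAt (fun s => φy s ⬝ᵥ e s)
        (φy t ⬝ᵥ (f (Y t, Z t) - Y' t) + φz t ⬝ᵥ g (Y t)) t := by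
    intro t ht
    have htIcc : t ∈ Set.Icc (0:ℝ) T := ⟨ht.1.le, ht.2.le⟩
    have htIco : t ∈ Set.Ico (0:ℝ) T := ⟨ht.1.le, ht.2⟩
    have hE : HasDerivAt e (f (y t, z t) - Y' t) t := (hy t htIcc).sub (hY t htIcc)
    have hd := dot_hasDerivAt (hadj1 t htIco) hE
    convert hd using 1
    -- algebraic identity for the derivative
    have h1 : ((fby t)ᵀ *ᵥ φy t) ⬝ᵥ e t = φy t ⬝ᵥ (fby t *ᵥ e t) :=
      transpose_mulVec_dot _ _ _
    have h2 : ((gby t)ᵀ *ᵥ φz t) ⬝ᵥ e t = φz t ⬝ᵥ (gby t *ᵥ e t) :=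
      transpose_mulVec_dot _ _ _
    have h3 : φy t ⬝ᵥ (fbz t *ᵥ (z t - Z t)) = 0 := by
      rw [← transpose_mulVec_dot, hadj2 t htIco, zero_dotProduct]
    have h4 : fby t *ᵥ e t = (f (y t, z t) - f (Y t, Z t)) - fbz t *ᵥ (z t - Z t) := by
      rw [eq_sub_iff_add_eq]; exact hlinf t
    rw [neg_dotProduct, add_dotProduct, h1, h2, h4, hling t]
    simp only [dotProduct_sub, dotProduct_neg, h3]
    ring
  -- continuity facts
  have hce : Continuous e := hyc.sub hYc
  have hcont1 : Continuous fun t => φy t ⬝ᵥ (f (Y t, Z t) - Y' t) :=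
    hφyc.dotProduct ((hf.continuous.comp (hYc.prodMk hZc)).sub hY'c)
  have hcont2 : Continuous fun t => φz t ⬝ᵥ g (Y t) :=
    hφzc.dotProduct (hg.continuous.comp hYc)
  have hint1 : IntervalIntegrable (fun t => φy t ⬝ᵥ (f (Y t, Z t) - Y' t))
      volume 0 T := hcont1.intervalIntegrable _ _
  have hint2 : IntervalIntegrable (fun t => φz t ⬝ᵥ g (Y t)) volume 0 T :=
    hcont2.intervalIntegrable _ _
  -- fundamental theorem of calculus
  have hftc : ∫ t in (0:ℝ)..T,
      (φy t ⬝ᵥ (f (Y t, Z t) - Y' t) + φz t ⬝ᵥ g (Y t))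
      = φy T ⬝ᵥ e T - φy 0 ⬝ᵥ e 0 :=
    intervalIntegral.integral_eq_sub_of_hasDerivAt_of_le hT.le
      ((hφyc.dotProduct hce).continuousOn) hderiv
      ((hcont1.add hcont2).intervalIntegrable _ _)
  rw [intervalIntegral.integral_add hint1 hint2] at hftc
  -- terminal condition algebra
  have hterm : φy T ⬝ᵥ e T
      = ζy ⬝ᵥ e T + ((((fbz T)ᵀ * (gby T)ᵀ)⁻¹ * (fbz T)ᵀ) *ᵥ ζy) ⬝ᵥ g (Y T) := by
    rw [hφT, Matrix.sub_mulVec, Matrix.one_mulVec, sub_dotProduct]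
    have : ((gby T)ᵀ * ((fbz T)ᵀ * (gby T)ᵀ)⁻¹ * (fbz T)ᵀ) *ᵥ ζy
        = (gby T)ᵀ *ᵥ ((((fbz T)ᵀ * (gby T)ᵀ)⁻¹ * (fbz T)ᵀ) *ᵥ ζy) := by
      rw [Matrix.mulVec_mulVec, Matrix.mul_assoc]
    rw [this, transpose_mulVec_dot, hling T, dotProduct_neg]
    ring
  have hcomm : ζy ⬝ᵥ e T = e T ⬝ᵥ ζy := dotProduct_comm _ _
  have hcomm0 : φy 0 ⬝ᵥ e 0 = e 0 ⬝ᵥ φy 0 := dotProduct_comm _ _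
  have hET : e T = y T - Y T := rfl
  have hE0 : e 0 = y 0 - Y 0 := rfl
  rw [← hET, ← hE0, ← hcomm, ← hcomm0]
  linarith [hftc, hterm]
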